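/- For any η ∈ (0,1), any q ∈ (0,1) with q = 1−η, and any continuous nonincreasing integrable φ : (0,1] → ℝ, one has lim_{η→0⁺} ∑_{k=0}^∞ η(1−η)^k φ((1−η)^k) = ∫₀¹ φ(x) dx; that is, the map η ↦ ∑_{k=0}^∞ η(1−η)^k φ((1−η)^k) on (0,1) extends continuously to η = 0 with value ∫₀¹ φ. -/

import Mathlib

open Filter MeasureTheory

section aux
variable {φ : ℝ → ℝ} (hmono : AntitoneOn φ (Set.Ioc 0 1))
  (hint : IntegrableOn φ (Set.Ioc 0 1)) {q : ℝ} (hq : q ∈ Set.Ioo (0:ℝ) 1)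

set_option linter.unusedSectionVars false
include hmono hint hq

lemma aux_ii (a b : ℝ) (h0 : 0 ≤ a) (hab : a ≤ b) (h1 : b ≤ 1) :
    IntervalIntegrable φ volume a b := by
  rw [intervalIntegrable_iff_integrableOn_Ioc_of_le hab]
  exact hint.mono_set (Set.Ioc_subset_Ioc h0 h1)

lemma aux_mem (k : ℕ) : q ^ k ∈ Set.Ioc (0:ℝ) 1 :=
  ⟨pow_pos hq.1 k, pow_le_one₀ hq.1.le hq.2.le⟩

lemma aux_piece_ub (k : ℕ) :
    (q ^ k - q ^ (k+1)) * φ (q ^ k) ≤ ∫ x in q ^ (k+1)..q ^ k, φ x := by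
  have hle : q ^ (k+1) ≤ q ^ k := pow_le_pow_of_le_one hq.1.le hq.2.le (Nat.le_succ k)
  have h := intervalIntegral.integral_mono_on (μ := volume) hle
    (intervalIntegrable_const (c := φ (q ^ k)))
    (aux_ii hmono hint hq _ _ (pow_pos hq.1 _).le hle (aux_mem hmono hint hq k).2)
    (fun x hx => by
      refine hmono ⟨lt_of_lt_of_le (pow_pos hq.1 _) hx.1, hx.2.trans (aux_mem hmono hint hq k).2⟩
        (aux_mem hmono hint hq k) hx.2)
  simpa [mul_comm] using h

lemma aux_piece_lb (k : ℕ) :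
    ∫ x in q ^ (k+1)..q ^ k, φ x ≤ (q ^ k - q ^ (k+1)) * φ (q ^ (k+1)) := by
  have hle : q ^ (k+1) ≤ q ^ k := pow_le_pow_of_le_one hq.1.le hq.2.le (Nat.le_succ k)
  have h := intervalIntegral.integral_mono_on (μ := volume) hle
    (aux_ii hmono hint hq _ _ (pow_pos hq.1 _).le hle (aux_mem hmono hint hq k).2)
    (intervalIntegrable_const (c := φ (q ^ (k+1))))
    (fun x hx => by
      refine hmono (aux_mem hmono hint hq (k+1))
        ⟨lt_of_lt_of_le (pow_pos hq.1 _) hx.1, hx.2.trans (aux_mem hmono hint hq k).2⟩ hx.1)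
  simpa [mul_comm] using h

lemma aux_telescope (N : ℕ) :
    ∑ k ∈ Finset.range N, ∫ x in q ^ (k+1)..q ^ k, φ x = ∫ x in q ^ N..(1:ℝ), φ x := by
  have h : ∑ k ∈ Finset.range N, ∫ x in q ^ k..q ^ (k+1), φ x = ∫ x in (q ^ 0)..(q ^ N), φ x := by
    apply intervalIntegral.sum_integral_adjacent_intervals
    intro k _
    exact (aux_ii hmono hint hq _ _ (pow_pos hq.1 _).le
      (pow_le_pow_of_le_one hq.1.le hq.2.le (Nat.le_succ k)) (aux_mem hmono hint hq k).2).symm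
  have h2 : ∀ k : ℕ, (∫ x in q ^ (k+1)..q ^ k, φ x) = -∫ x in q ^ k..q ^ (k+1), φ x := by
    intro k; rw [intervalIntegral.integral_symm]
  simp_rw [h2]
  rw [Finset.sum_neg_distrib, h, pow_zero, intervalIntegral.integral_symm, neg_neg]

lemma aux_tendsto :
    Tendsto (fun N : ℕ => ∫ x in q ^ N..(1:ℝ), φ x) atTop
      (nhds (∫ x in Set.Ioc (0:ℝ) 1, φ x)) := by
  have hU : (⋃ N : ℕ, Set.Ioc (q ^ N) 1) = Set.Ioc (0:ℝ) 1 := by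
    ext x
    simp only [Set.mem_iUnion, Set.mem_Ioc]
    constructor
    · rintro ⟨N, h1, h2⟩; exact ⟨(pow_pos hq.1 N).trans h1, h2⟩
    · rintro ⟨hx0, hx1⟩
      obtain ⟨N, hN⟩ := ((tendsto_pow_atTop_nhds_zero_of_lt_one hq.1.le hq.2).eventually
        (gt_mem_nhds hx0)).exists
      exact ⟨N, hN, hx1⟩
  have := tendsto_setIntegral_of_monotone (μ := volume) (f := φ)
    (s := fun N : ℕ => Set.Ioc (q ^ N) 1)
    (fun N => measurableSet_Ioc)
    (fun i j hij => Set.Ioc_subset_Ioc_left (pow_le_pow_of_le_one hq.1.le hq.2.le hij))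
    (by rw [hU]; exact hint)
  rw [hU] at this
  convert this using 2 with N
  rw [intervalIntegral.integral_of_le (aux_mem hmono hint hq N).2]

lemma aux_left (a : ℝ) (ha : a ∈ Set.Ioc (0:ℝ) 1) :
    a * φ 1 ≤ ∫ x in (0:ℝ)..a, φ x := by
  rw [intervalIntegral.integral_of_le ha.1.le]
  have h := setIntegral_mono_on (μ := volume) (s := Set.Ioc 0 a)
    (integrableOn_const measure_Ioc_lt_top.ne)
    (hint.mono_set (Set.Ioc_subset_Ioc le_rfl ha.2)) measurableSet_Ioc
    (fun x hx => hmono ⟨hx.1, hx.2.trans ha.2⟩ (by norm_num) (hx.2.trans ha.2))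
  simpa [Real.volume_Ioc, ENNReal.toReal_ofReal ha.1.le, mul_comm, max_eq_left ha.1.le] using h

lemma aux_IN_le (N : ℕ) :
    (∫ x in q ^ N..(1:ℝ), φ x) ≤ (∫ x in Set.Ioc (0:ℝ) 1, φ x) + |φ 1| := by
  have hsplit : (∫ x in (0:ℝ)..(q^N), φ x) + (∫ x in q ^ N..(1:ℝ), φ x)
      = ∫ x in (0:ℝ)..1, φ x :=
    intervalIntegral.integral_add_adjacent_intervals
      (aux_ii hmono hint hq _ _ le_rfl (pow_pos hq.1 N).le (aux_mem hmono hint hq N).2)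
      (aux_ii hmono hint hq _ _ (pow_pos hq.1 N).le (aux_mem hmono hint hq N).2 le_rfl)
  have h1 : q ^ N * φ 1 ≤ ∫ x in (0:ℝ)..(q^N), φ x :=
    aux_left hmono hint hq _ (aux_mem hmono hint hq N)
  have h2 : -|φ 1| ≤ q ^ N * φ 1 := by
    rcases le_or_gt 0 (φ 1) with h | h
    · nlinarith [pow_pos hq.1 N, abs_nonneg (φ 1)]
    · rw [abs_of_neg h]; nlinarith [pow_pos hq.1 N, (aux_mem hmono hint hq N).2]
  have h3 : (∫ x in (0:ℝ)..1, φ x) = ∫ x in Set.Ioc (0:ℝ) 1, φ x := by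
    rw [intervalIntegral.integral_of_le (by norm_num : (0:ℝ) ≤ 1)]
  linarith

lemma aux_summable : Summable (fun k : ℕ => q ^ k * φ (q ^ k)) := by
  have key : Summable (fun k : ℕ => q ^ k * (φ (q ^ k) - φ 1)) := by
    apply summable_of_sum_range_le (c := ((∫ x in Set.Ioc (0:ℝ) 1, φ x) + 2 * |φ 1|) / (1 - q))
    · intro k
      have h1 := hmono (aux_mem hmono hint hq k) (by norm_num : (1:ℝ) ∈ Set.Ioc (0:ℝ) 1) (aux_mem hmono hint hq k).2
      have h2 := (pow_pos hq.1 k).le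
      nlinarith
    · intro N
      have hub : ∑ k ∈ Finset.range N, (q ^ k - q ^ (k+1)) * φ (q ^ k)
          ≤ (∫ x in Set.Ioc (0:ℝ) 1, φ x) + |φ 1| := by
        calc ∑ k ∈ Finset.range N, (q ^ k - q ^ (k+1)) * φ (q ^ k)
            ≤ ∑ k ∈ Finset.range N, ∫ x in q ^ (k+1)..q ^ k, φ x :=
              Finset.sum_le_sum fun k _ => aux_piece_ub hmono hint hq k
          _ = ∫ x in q ^ N..(1:ℝ), φ x := aux_telescope hmono hint hq N
          _ ≤ _ := aux_IN_le hmono hint hq N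
      have hgeo : ∑ k ∈ Finset.range N, (q ^ k - q ^ (k+1)) * φ 1 = (1 - q ^ N) * φ 1 := by
        have : ∑ k ∈ Finset.range N, (q ^ k - q ^ (k+1)) = 1 - q ^ N := by
          have := Finset.sum_range_sub' (fun k => q ^ k) N
          simpa using this
        rw [← Finset.sum_mul, this]
      have hsub : ∑ k ∈ Finset.range N, (q ^ k - q ^ (k+1)) * (φ (q ^ k) - φ 1)
          ≤ (∫ x in Set.Ioc (0:ℝ) 1, φ x) + 2 * |φ 1| := by
        have hq1 : (1 - q ^ N) * φ 1 ≥ -|φ 1| := by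
          have h1 : q ^ N ≤ 1 := (aux_mem hmono hint hq N).2
          have h2 : 0 < q ^ N := pow_pos hq.1 N
          rcases le_or_gt 0 (φ 1) with h | h
          · nlinarith [abs_nonneg (φ 1)]
          · rw [abs_of_neg h]; nlinarith
        have : ∑ k ∈ Finset.range N, (q ^ k - q ^ (k+1)) * (φ (q ^ k) - φ 1)
            = (∑ k ∈ Finset.range N, (q ^ k - q ^ (k+1)) * φ (q ^ k)) - (1 - q ^ N) * φ 1 := by
          rw [← hgeo, ← Finset.sum_sub_distrib]
          congr 1; ext k; ring
        linarith
      have hfac : ∀ k : ℕ, (q ^ k - q ^ (k+1)) * (φ (q ^ k) - φ 1)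
          = (1 - q) * (q ^ k * (φ (q ^ k) - φ 1)) := by intro k; ring
      simp_rw [hfac] at hsub
      rw [← Finset.mul_sum] at hsub
      rw [le_div_iff₀ (by linarith [hq.2] : (0:ℝ) < 1 - q), mul_comm]
      exact hsub
  have hgeo : Summable (fun k : ℕ => q ^ k * φ 1) :=
    (summable_geometric_of_lt_one hq.1.le hq.2).mul_right _
  have := key.add hgeo
  convert this using 2 with k
  ring

end aux

theorem stmt_17 (φ : ℝ → ℝ) (hcont : ContinuousOn φ (Set.Ioc 0 1))
    (hmono : AntitoneOn φ (Set.Ioc 0 1))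
    (hint : IntegrableOn φ (Set.Ioc 0 1)) :
    Tendsto (fun η : ℝ => ∑' k : ℕ, η * (1 - η) ^ k * φ ((1 - η) ^ k))
      (nhdsWithin 0 (Set.Ioo 0 1))
      (nhds (∫ x in Set.Ioc (0:ℝ) 1, φ x)) := by
  set J : ℝ := ∫ x in Set.Ioc (0:ℝ) 1, φ x with hJdef
  have key : ∀ η ∈ Set.Ioo (0:ℝ) 1,
      (η * φ 1 + (1 - η) * J ≤ ∑' k : ℕ, η * (1 - η) ^ k * φ ((1 - η) ^ k)) ∧
      (∑' k : ℕ, η * (1 - η) ^ k * φ ((1 - η) ^ k) ≤ J) := by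
    intro η hη
    set q : ℝ := 1 - η with hqdef
    have hq : q ∈ Set.Ioo (0:ℝ) 1 := ⟨by simp [hqdef]; linarith [hη.2], by simp [hqdef]; linarith [hη.1]⟩
    have hterm : ∀ k : ℕ, η * (1 - η) ^ k * φ ((1 - η) ^ k)
        = (q ^ k - q ^ (k + 1)) * φ (q ^ k) := by
      intro k
      have : q ^ k - q ^ (k + 1) = η * q ^ k := by rw [hqdef]; ring
      rw [this, ← hqdef]
    have hsum : Summable (fun k : ℕ => η * (1 - η) ^ k * φ ((1 - η) ^ k)) := by
      have := (aux_summable hmono hint hq).mul_left η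
      refine this.congr fun k => ?_
      rw [hterm k]
      have : q ^ k - q ^ (k + 1) = η * q ^ k := by rw [hqdef]; ring
      rw [this]; ring
    have hps := hsum.hasSum.tendsto_sum_nat
    constructor
    · -- lower bound
      have hsucc : Summable (fun k : ℕ => η * (1 - η) ^ (k+1) * φ ((1 - η) ^ (k+1))) :=
        (summable_nat_add_iff 1).2 hsum
      have hlow : q * J ≤ ∑' k : ℕ, η * (1 - η) ^ (k+1) * φ ((1 - η) ^ (k+1)) := by
        refine le_of_tendsto_of_tendsto' ((aux_tendsto hmono hint hq).const_mul q)
          hsucc.hasSum.tendsto_sum_nat (fun N => ?_)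
        rw [← aux_telescope hmono hint hq N, Finset.mul_sum]
        refine Finset.sum_le_sum fun k _ => ?_
        have h := aux_piece_lb hmono hint hq k
        have := mul_le_mul_of_nonneg_left h hq.1.le
        rw [hterm (k+1)]
        calc q * ∫ x in q ^ (k+1)..q ^ k, φ x
            ≤ q * ((q ^ k - q ^ (k + 1)) * φ (q ^ (k+1))) := this
          _ = (q ^ (k+1) - q ^ (k+1+1)) * φ (q ^ (k+1)) := by rw [hqdef]; ring
      have hzero := Summable.tsum_eq_zero_add hsum
      rw [hzero]
      have h0 : η * (1 - η) ^ 0 * φ ((1 - η) ^ 0) = η * φ 1 := by norm_num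
      rw [h0]
      linarith
    · -- upper bound
      refine le_of_tendsto_of_tendsto' hps (aux_tendsto hmono hint hq) (fun N => ?_)
      rw [← aux_telescope hmono hint hq N]
      refine Finset.sum_le_sum fun k _ => ?_
      rw [hterm k]
      exact aux_piece_ub hmono hint hq k
  have hglim : Tendsto (fun η : ℝ => η * φ 1 + (1 - η) * J)
      (nhdsWithin 0 (Set.Ioo 0 1)) (nhds J) := by
    have hc : Continuous (fun η : ℝ => η * φ 1 + (1 - η) * J) := by continuity
    have h2 := (hc.tendsto 0).mono_left (nhdsWithin_le_nhds (s := Set.Ioo (0:ℝ) 1))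
    simpa using h2
  refine tendsto_of_tendsto_of_tendsto_of_le_of_le' hglim tendsto_const_nhds ?_ ?_
  · filter_upwards [self_mem_nhdsWithin] with η hη
    exact (key η hη).1
  · filter_upwards [self_mem_nhdsWithin] with η hη
    exact (key η hη).2
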